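/- Let n ≥ 2, let a ∈ (0,1), and let p(z) = (z−a)·∏_{k=1}^{n−1}(z−z_k) with |z_k| ≤ 1 for all k, and let ρ₁ denote the minimum of |a − ζ| over the zeros ζ of p′. Then for every k ∈ {1, …, n−1}, 2·ρ₁·sin(π/n) ≤ |a − z_k| ≤ 1 + a. -/

import Mathlib

open Polynomial Real Complex

noncomputable def pairF (m : ℕ) (f q : Polynomial ℂ) : ℂ :=
  ∑ k ∈ Finset.range (m+1), (-1)^k * f.coeff k * q.coeff (m-k) / (m.choose k : ℂ)

lemma pair_C_mul (m : ℕ) (c : ℂ) (f q : Polynomial ℂ) :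
    pairF m (C c * f) q = c * pairF m f q := by
  unfold pairF
  rw [Finset.mul_sum]
  refine Finset.sum_congr rfl fun k _ => ?_
  rw [coeff_C_mul]; ring

lemma coeff_q1 (M : ℕ) (ζ : ℂ) (q : Polynomial ℂ) (i : ℕ) :
    (C (M:ℂ) * q + (C ζ - X) * q.derivative).coeff i
      = ((M:ℂ) - i) * q.coeff i + ζ * (i+1) * q.coeff (i+1) := by
  rcases i with _ | j
  · simp [sub_mul, coeff_derivative, mul_coeff_zero]
  · simp [sub_mul, coeff_derivative, coeff_X_mul]
    push_cast; ring

lemma pair_mul (m : ℕ) (ζ : ℂ) (g q : Polynomial ℂ) (hg : g.coeff (m+1) = 0) :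
    pairF m g (C ((m+1 : ℕ):ℂ) * q + (C ζ - X) * q.derivative)
      = -((m+1 : ℕ):ℂ) * pairF (m+1) ((X - C ζ) * g) q := by
  unfold pairF
  have hfc : ∀ k, ((X - C ζ) * g).coeff k = (X * g).coeff k - ζ * g.coeff k := by
    intro k; rw [sub_mul, coeff_sub, coeff_C_mul]
  have hsplit : ∑ k ∈ Finset.range (m+1+1),
      (-1)^k * ((X - C ζ) * g).coeff k * q.coeff (m+1-k) / ((m+1).choose k : ℂ)
      = (∑ k ∈ Finset.range (m+1+1),
          (-1)^k * (X * g).coeff k * q.coeff (m+1-k) / ((m+1).choose k : ℂ))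
        - (∑ k ∈ Finset.range (m+1+1),
          ζ * ((-1)^k * g.coeff k * q.coeff (m+1-k) / ((m+1).choose k : ℂ))) := by
    rw [← Finset.sum_sub_distrib]
    refine Finset.sum_congr rfl fun k _ => ?_
    rw [hfc]; ring
  have hA : ∑ k ∈ Finset.range (m+1+1),
      (-1)^k * (X * g).coeff k * q.coeff (m+1-k) / ((m+1).choose k : ℂ)
      = ∑ i ∈ Finset.range (m+1),
      (-1)^(i+1) * g.coeff i * q.coeff (m-i) / ((m+1).choose (i+1) : ℂ) := by
    rw [Finset.sum_range_succ']
    simp [coeff_X_mul, mul_coeff_zero, Nat.succ_sub_succ]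
  have hB : ∑ k ∈ Finset.range (m+1+1),
      ζ * ((-1)^k * g.coeff k * q.coeff (m+1-k) / ((m+1).choose k : ℂ))
      = ∑ k ∈ Finset.range (m+1),
      ζ * ((-1)^k * g.coeff k * q.coeff (m+1-k) / ((m+1).choose k : ℂ)) := by
    rw [Finset.sum_range_succ, hg]
    simp
  rw [hsplit, hA, hB, mul_sub, Finset.mul_sum, Finset.mul_sum, ← Finset.sum_sub_distrib]
  refine Finset.sum_congr rfl fun j hjr => ?_
  have hj : j ≤ m := Finset.mem_range_succ_iff.mp hjr
  rw [coeff_q1]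
  have c0 : (m.choose j : ℂ) ≠ 0 := Nat.cast_ne_zero.mpr (Nat.choose_pos hj).ne'
  have c1 : ((m+1).choose (j+1) : ℂ) ≠ 0 :=
    Nat.cast_ne_zero.mpr (Nat.choose_pos (by omega)).ne'
  have c2 : ((m+1).choose j : ℂ) ≠ 0 :=
    Nat.cast_ne_zero.mpr (Nat.choose_pos (by omega)).ne'
  have d1 : ((j:ℂ)+1) / (m.choose j : ℂ) = ((m:ℂ)+1) / ((m+1).choose (j+1) : ℂ) := by
    rw [div_eq_div_iff c0 c1]
    have e1 := Nat.add_one_mul_choose_eq m j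
    have h' : ((Nat.succ m * m.choose j : ℕ) : ℂ) = (((m+1).choose (j+1) * Nat.succ j : ℕ) : ℂ) := by
      rw [e1]
    push_cast at h'
    linear_combination -h'
  have d2 : ((m:ℂ)+1-j) / (m.choose j : ℂ) = ((m:ℂ)+1) / ((m+1).choose j : ℂ) := by
    rw [div_eq_div_iff c0 c2]
    have e2 := Nat.choose_mul_succ_eq m j
    have h' : ((m.choose j * (m+1) : ℕ) : ℂ) = (((m+1).choose j * (m + 1 - j) : ℕ) : ℂ) := by
      rw [e2]
    push_cast [Nat.cast_sub (by omega : j ≤ m+1)] at h'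
    linear_combination -h'
  have hidx : m - j + 1 = m + 1 - j := by omega
  have hmc : ((m+1 : ℕ) : ℂ) = (m:ℂ)+1 := by push_cast; ring
  have hmj : ((m - j : ℕ) : ℂ) = (m:ℂ) - j := by
    push_cast [Nat.cast_sub hj]; ring
  rw [hidx, hmc, hmj]
  have key : (-1:ℂ)^j * g.coeff j * (((m:ℂ)+1 - ((m:ℂ)-j)) * q.coeff (m-j)
        + ζ * (((m:ℂ)-j)+1) * q.coeff (m+1-j)) / (m.choose j : ℂ)
      = ((-1)^j * g.coeff j * q.coeff (m-j)) * (((j:ℂ)+1) / (m.choose j : ℂ))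
        + ((-1)^j * g.coeff j * ζ * q.coeff (m+1-j)) * (((m:ℂ)+1-j) / (m.choose j : ℂ)) := by
    ring
  rw [key, d1, d2]
  ring

lemma Kmem (R : ℝ) (z0 u : ℂ) (hR : 0 ≤ R) (hz : R < ‖z0‖) (hu : z0 ≠ u) :
    ‖((‖z0‖^2 - R^2 : ℝ) : ℂ) * (z0 - u)⁻¹ - (starRingEnd ℂ) z0‖ ≤ R ↔ ‖u‖ ≤ R := by
  set D : ℝ := ‖z0‖^2 - R^2 with hD
  have hD0 : 0 < D := by
    have : 0 ≤ ‖z0‖ := norm_nonneg _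
    nlinarith
  have hzu : z0 - u ≠ 0 := sub_ne_zero.mpr hu
  set v : ℂ := (z0 - u)⁻¹ with hv
  have hv0 : v ≠ 0 := inv_ne_zero hzu
  have hvn : 0 < ‖v‖ := norm_pos_iff.mpr hv0
  have huv : z0 * v - 1 = u * v := by
    have h1 : (z0 - u) * v = 1 := mul_inv_cancel₀ hzu
    calc z0 * v - 1 = (z0 - u) * v + u * v - 1 := by ring
    _ = u * v := by rw [h1]; ring
  have hid : ‖(D : ℂ) * v - (starRingEnd ℂ) z0‖^2 - R^2
      = D * (‖z0 * v - 1‖^2 - R^2 * ‖v‖^2) := by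
    have e1 : ∀ w : ℂ, ‖w‖^2 = w.re^2 + w.im^2 := by
      intro w
      rw [Complex.sq_norm, Complex.normSq_apply]; ring
    have hDre : D = z0.re^2 + z0.im^2 - R^2 := by
      rw [hD, e1]
    rw [e1, e1, e1]
    simp only [Complex.mul_re, Complex.mul_im, Complex.sub_re, Complex.sub_im,
      Complex.ofReal_re, Complex.ofReal_im, Complex.conj_re, Complex.conj_im,
      Complex.one_re, Complex.one_im]
    rw [hDre]
    ring
  have habs : ‖z0 * v - 1‖ = ‖u‖ * ‖v‖ := by rw [huv, norm_mul]
  rw [habs] at hid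
  constructor
  · intro h
    have h2 : ‖(D : ℂ) * v - (starRingEnd ℂ) z0‖^2 ≤ R^2 := by
      nlinarith [norm_nonneg ((D : ℂ) * v - (starRingEnd ℂ) z0)]
    have h3 : (‖u‖^2 - R^2) * ‖v‖^2 ≤ 0 := by nlinarith
    have h4 : ‖u‖^2 ≤ R^2 := by nlinarith [mul_pos hvn hvn]
    nlinarith [norm_nonneg u]
  · intro h
    have h4 : ‖u‖^2 ≤ R^2 := by nlinarith [norm_nonneg u]
    have h3 : (‖u‖ * ‖v‖)^2 - R^2 * ‖v‖^2 ≤ 0 := by nlinarith [sq_nonneg ‖v‖]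
    have h2 : D * ((‖u‖ * ‖v‖)^2 - R^2 * ‖v‖^2) ≤ 0 :=
      mul_nonpos_of_nonneg_of_nonpos hD0.le h3
    nlinarith [norm_nonneg ((D : ℂ) * v - (starRingEnd ℂ) z0)]

lemma logderiv (z : ℂ) : ∀ (s : Multiset ℂ), (∀ r ∈ s, z - r ≠ 0) →
    (derivative (s.map fun r => X - C r).prod).eval z
      = ((s.map fun r => X - C r).prod.eval z) * (s.map fun r => (z - r)⁻¹).sum := by
  refine Multiset.induction ?_ ?_
  · simp
  · intro a s ih h
    have ha : z - a ≠ 0 := h a (Multiset.mem_cons_self a s)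
    have hs : ∀ r ∈ s, z - r ≠ 0 := fun r hr => h r (Multiset.mem_cons_of_mem hr)
    simp only [Multiset.map_cons, Multiset.prod_cons, Multiset.sum_cons, derivative_mul,
      derivative_sub, derivative_X, derivative_C, sub_zero, eval_add, eval_mul, eval_sub,
      eval_X, eval_C, eval_one, one_mul]
    rw [ih hs]
    field_simp

lemma laguerre (R : ℝ) (hR : 0 ≤ R) (q : Polynomial ℂ) (hq0 : q ≠ 0)
    (hM : 1 ≤ q.natDegree)
    (hroots : ∀ z, q.eval z = 0 → ‖z‖ ≤ R) (ζ : ℂ) (hζ : R < ‖ζ‖) (z0 : ℂ)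
    (h0 : ((q.natDegree : ℂ)) * q.eval z0 + (ζ - z0) * q.derivative.eval z0 = 0) :
    ‖z0‖ ≤ R := by
  by_contra hz0'
  push_neg at hz0'
  have hqz0 : q.eval z0 ≠ 0 := fun h => absurd (hroots z0 h) (not_le.mpr hz0')
  set M : ℕ := q.natDegree with hMdef
  have hcard : Multiset.card q.roots = M :=
    (Polynomial.splits_iff_card_roots.mp (IsAlgClosed.splits q))
  set s : Multiset ℂ := q.roots with hs
  have hfact : C q.leadingCoeff * (s.map fun r => X - C r).prod = q :=
    C_leadingCoeff_mul_prod_multiset_X_sub_C hcard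
  have hmem : ∀ r ∈ s, ‖r‖ ≤ R := by
    intro r hr
    exact hroots r ((Polynomial.mem_roots'.mp hr).2)
  have hne : ∀ r ∈ s, z0 - r ≠ 0 := by
    intro r hr
    have := hmem r hr
    intro hzr
    rw [sub_eq_zero] at hzr
    rw [← hzr] at this
    linarith
  set S : ℂ := (s.map fun r => (z0 - r)⁻¹).sum with hS
  have hqev : q.eval z0 = q.leadingCoeff * ((s.map fun r => X - C r).prod.eval z0) := by
    conv_lhs => rw [← hfact]
    rw [eval_mul, eval_C]
  have hld : q.derivative.eval z0 = q.eval z0 * S := by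
    conv_lhs => rw [← hfact]
    rw [derivative_C_mul, eval_mul, eval_C, logderiv z0 s hne, hqev]
    ring
  have hz0ζ : z0 ≠ ζ := by
    intro hzz
    rw [← hzz, sub_self, zero_mul, add_zero, mul_eq_zero] at h0
    rcases h0 with h | h
    · exact (Nat.cast_ne_zero.mpr (by omega : M ≠ 0)) h
    · exact hqz0 h
  have hSM : S = (M : ℂ) * (z0 - ζ)⁻¹ := by
    have h1 : (M : ℂ) * q.eval z0 + (ζ - z0) * (q.eval z0 * S) = 0 := by
      rw [← hld]; exact h0
    have h2 : q.eval z0 * ((M : ℂ) + (ζ - z0) * S) = 0 := by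
      rw [← h1]; ring
    have h3 : (M : ℂ) + (ζ - z0) * S = 0 := by
      rcases mul_eq_zero.mp h2 with h | h
      · exact absurd h hqz0
      · exact h
    have hzζ : z0 - ζ ≠ 0 := sub_ne_zero.mpr hz0ζ
    have h4 : S * (z0 - ζ) = (M:ℂ) := by linear_combination -h3
    rw [← h4, mul_inv_cancel_right₀ hzζ]
  set D : ℝ := ‖z0‖^2 - R^2 with hD
  have hsum : ‖(D : ℂ) * S - (M : ℂ) * (starRingEnd ℂ) z0‖ ≤ (M : ℝ) * R := by
    have he : (D : ℂ) * S - (M : ℂ) * (starRingEnd ℂ) z0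
        = (s.map fun r => (D : ℂ) * (z0 - r)⁻¹ - (starRingEnd ℂ) z0).sum := by
      rw [Multiset.sum_map_sub]
      congr 1
      · rw [hS, Multiset.sum_map_mul_left]
      · rw [Multiset.map_const', Multiset.sum_replicate, hcard]
        simp
    rw [he]
    calc ‖(s.map fun r => (D : ℂ) * (z0 - r)⁻¹ - (starRingEnd ℂ) z0).sum‖
        ≤ ((s.map fun r => (D : ℂ) * (z0 - r)⁻¹ - (starRingEnd ℂ) z0).map norm).sum :=
          norm_multiset_sum_le _
      _ ≤ (Multiset.card ((s.map fun r => (D : ℂ) * (z0 - r)⁻¹ - (starRingEnd ℂ) z0).map norm)) • R := by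
          apply Multiset.sum_le_card_nsmul
          intro x hx
          rw [Multiset.mem_map] at hx
          obtain ⟨y, hy, hxy⟩ := hx
          rw [Multiset.mem_map] at hy
          obtain ⟨r, hr, hyr⟩ := hy
          have hz0r : z0 ≠ r := by
            intro hh
            exact hne r hr (by rw [hh, sub_self])
          rw [← hxy, ← hyr]
          exact (Kmem R z0 r hR hz0' hz0r).mpr (hmem r hr)
      _ = (M : ℝ) * R := by
          rw [Multiset.card_map, Multiset.card_map, hcard, nsmul_eq_mul]
  rw [hSM] at hsum
  have he2 : (D : ℂ) * ((M : ℂ) * (z0 - ζ)⁻¹) - (M : ℂ) * (starRingEnd ℂ) z0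
      = (M : ℂ) * ((D : ℂ) * (z0 - ζ)⁻¹ - (starRingEnd ℂ) z0) := by ring
  rw [he2, norm_mul, Complex.norm_natCast] at hsum
  have hM0 : (0:ℝ) < (M:ℝ) := by
    exact_mod_cast Nat.pos_of_ne_zero (by omega)
  have hfin : ‖(D : ℂ) * (z0 - ζ)⁻¹ - (starRingEnd ℂ) z0‖ ≤ R :=
    le_of_mul_le_mul_left (by linarith [hsum]) hM0
  have := (Kmem R z0 ζ hR hz0' hz0ζ).mp hfin
  linarith

lemma monic_prod_XsubC (l : List ℂ) : ((l.map fun y => X - C y).prod).Monic := by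
  induction l with
  | nil => simpa using monic_one
  | cons a l ih =>
    simp only [List.map_cons, List.prod_cons]
    exact (monic_X_sub_C a).mul ih

lemma natDegree_prod_XsubC (l : List ℂ) :
    ((l.map fun y => X - C y).prod).natDegree = l.length := by
  induction l with
  | nil => simp
  | cons a l ih =>
    simp only [List.map_cons, List.prod_cons, List.length_cons]
    rw [(monic_X_sub_C a).natDegree_mul (monic_prod_XsubC l), natDegree_X_sub_C, ih]
    omega

lemma grace (R : ℝ) (hR : 0 ≤ R) : ∀ (w : List ℂ), w ≠ [] → ∀ (q : Polynomial ℂ),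
    q ≠ 0 → q.natDegree = w.length → (∀ z, q.eval z = 0 → ‖z‖ ≤ R) →
    pairF w.length ((w.map fun x => X - C x).prod) q = 0 → ∃ x ∈ w, ‖x‖ ≤ R := by
  intro w
  induction w with
  | nil => intro h; exact absurd rfl h
  | cons ζ t ih =>
    intro _ q hq0 hqd hqr hpair
    cases t with
    | nil =>
      simp only [List.length_cons, List.length_nil] at hqd hpair
      have hflist : (((ζ : ℂ) :: ([] : List ℂ)).map fun x => X - C x).prod = X - C ζ := by
        simp
      rw [hflist] at hpair
      have hpc : pairF 1 (X - C ζ) q = -(q.coeff 1 * ζ + q.coeff 0) := by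
        simp [pairF, Finset.sum_range_succ, Finset.sum_range_one, coeff_sub,
          coeff_X_zero, coeff_X_one, coeff_C]
        ring
      rw [hpc] at hpair
      have hq1 : q = C (q.coeff 1) * X + C (q.coeff 0) :=
        eq_X_add_C_of_natDegree_le_one (by omega)
      have heval : q.eval ζ = 0 := by
        conv_lhs => rw [hq1]
        simp only [eval_add, eval_mul, eval_C, eval_X]
        linear_combination -hpair
      exact ⟨ζ, List.mem_cons_self, hqr ζ heval⟩
    | cons x t' =>
      by_contra hcon
      push_neg at hcon
      set m : ℕ := t'.length + 1 with hm
      have hζR : R < ‖ζ‖ := hcon ζ (List.mem_cons_self)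
      have hlen : (ζ :: x :: t').length = m + 1 := by simp [hm]
      rw [hlen] at hqd hpair
      set g : Polynomial ℂ := ((x :: t').map fun y => X - C y).prod with hg
      have hfg : ((ζ :: x :: t').map fun y => X - C y).prod = (X - C ζ) * g := by
        simp [hg]
      have hgdeg : g.natDegree = m := by
        rw [hg, natDegree_prod_XsubC]; simp [hm]
      have hgc : g.coeff (m+1) = 0 :=
        coeff_eq_zero_of_natDegree_lt (by omega)
      set q1 : Polynomial ℂ := C ((m+1 : ℕ):ℂ) * q + (C ζ - X) * q.derivative with hq1def
      have hpair1 : pairF m g q1 = 0 := by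
        rw [hq1def, pair_mul m ζ g q hgc, ← hfg, hpair, mul_zero]
      have hb : q.leadingCoeff ≠ 0 := leadingCoeff_ne_zero.mpr hq0
      have hcard : Multiset.card q.roots = m + 1 := by
        rw [Polynomial.splits_iff_card_roots.mp (IsAlgClosed.splits q), hqd]
      have hfact : C q.leadingCoeff * (q.roots.map fun r => X - C r).prod = q :=
        C_leadingCoeff_mul_prod_multiset_X_sub_C (by rw [hcard, hqd])
      have hvieta : ((q.roots.map fun r => X - C r).prod).coeff m = -q.roots.sum := by
        have := multiset_prod_X_sub_C_coeff_card_pred q.roots (by rw [hcard]; omega)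
        rwa [hcard] at this
      have hqm : q.coeff m = q.leadingCoeff * (-q.roots.sum) := by
        conv_lhs => rw [← hfact]
        rw [coeff_C_mul, hvieta]
      have hqm1 : q.coeff (m+1) = q.leadingCoeff := by
        conv_lhs => rw [← hqd]
        exact coeff_natDegree
      have hq1m : q1.coeff m = q.leadingCoeff * (((m:ℂ)+1) * ζ - q.roots.sum) := by
        rw [hq1def, coeff_q1, hqm, hqm1]
        push_cast
        ring
      have hrootnorm : ∀ r ∈ q.roots, ‖r‖ ≤ R := fun r hr =>
        hqr r (Polynomial.mem_roots'.mp hr).2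
      have hSig : ‖q.roots.sum‖ ≤ ((m:ℝ)+1) * R := by
        calc ‖q.roots.sum‖ ≤ ((q.roots.map norm).sum) := norm_multiset_sum_le _
          _ ≤ (Multiset.card (q.roots.map norm)) • R := by
              apply Multiset.sum_le_card_nsmul
              intro y hy
              rw [Multiset.mem_map] at hy
              obtain ⟨r, hr, hyr⟩ := hy
              rw [← hyr]; exact hrootnorm r hr
          _ = ((m:ℝ)+1) * R := by
              rw [Multiset.card_map, hcard, nsmul_eq_mul]; push_cast; ring
      have hne0 : ((m:ℂ)+1) * ζ - q.roots.sum ≠ 0 := by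
        intro h
        rw [sub_eq_zero] at h
        have hnn : ‖((m:ℂ)+1) * ζ‖ = ((m:ℝ)+1) * ‖ζ‖ := by
          rw [norm_mul]
          congr 1
          have hcast : ((m:ℂ)+1) = ((m+1 : ℕ) : ℂ) := by push_cast; ring
          rw [hcast, Complex.norm_natCast]
          push_cast; ring
        rw [← h, hnn] at hSig
        have hmpos : (0:ℝ) < (m:ℝ)+1 := by positivity
        nlinarith
      have hq1m0 : q1.coeff m ≠ 0 := by
        rw [hq1m]; exact mul_ne_zero hb hne0
      have hq10 : q1 ≠ 0 := fun h => hq1m0 (by rw [h, coeff_zero])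
      have hq1deg : q1.natDegree = m := by
        have hup : q1.natDegree ≤ m + 1 := by
          rw [hq1def]
          apply le_trans (natDegree_add_le _ _)
          apply max_le
          · exact le_trans (natDegree_C_mul_le _ _) (le_of_eq hqd)
          · apply le_trans natDegree_mul_le
            have h1 : (C ζ - X : Polynomial ℂ).natDegree ≤ 1 := by
              apply le_trans (natDegree_sub_le _ _)
              simp
            have h2 : q.derivative.natDegree ≤ m := by
              apply le_trans (natDegree_derivative_le q)
              omega
            omega
        have hcm1 : q1.coeff (m+1) = 0 := by
          rw [hq1def, coeff_q1]
          have e1 : q.coeff (m+1+1) = 0 := coeff_eq_zero_of_natDegree_lt (by omega)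
          rw [e1]
          push_cast
          ring
        have hne : q1.natDegree ≠ m + 1 := by
          intro h
          apply leadingCoeff_ne_zero.mpr hq10
          rw [leadingCoeff, h, hcm1]
        have hlow : m ≤ q1.natDegree := le_natDegree_of_ne_zero hq1m0
        omega
      have hq1r : ∀ z, q1.eval z = 0 → ‖z‖ ≤ R := by
        intro z hz
        apply laguerre R hR q hq0 (by omega) hqr ζ hζR z
        rw [hq1def] at hz
        simp only [eval_add, eval_mul, eval_sub, eval_C, eval_X] at hz
        rw [hqd]
        push_cast
        push_cast at hz
        linear_combination hz
      have hlent : (x :: t').length = m := by simp [hm]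
      have hih := ih (List.cons_ne_nil x t') q1 hq10 (by rw [hq1deg, hlent]) hq1r
        (by rw [hlent]; exact hpair1)
      obtain ⟨y, hy, hyR⟩ := hih
      exact absurd hyR (not_le.mpr (hcon y (List.mem_cons_of_mem ζ hy)))

lemma unity_dist (n : ℕ) (hn : 2 ≤ n) (ξ : ℂ) (hξ : ξ^n = 1) (hξ1 : ξ ≠ 1) :
    2 * Real.sin (Real.pi / n) ≤ ‖1 - ξ‖ := by
  have hn0 : (0:ℝ) < (n:ℝ) := by positivity
  have hn2 : (2:ℝ) ≤ (n:ℝ) := by exact_mod_cast hn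
  have habs1 : ‖ξ‖ = 1 := by
    have h1 : ‖ξ‖^n = 1 := by
      rw [← norm_pow, hξ, norm_one]
    have h2 : 0 ≤ ‖ξ‖ := norm_nonneg _
    rcases lt_trichotomy ‖ξ‖ 1 with h | h | h
    · exfalso
      have := pow_lt_one₀ h2 h (by omega : n ≠ 0)
      rw [h1] at this; exact lt_irrefl _ this
    · exact h
    · exfalso
      have := one_lt_pow₀ h (by omega : n ≠ 0)
      rw [h1] at this; exact lt_irrefl _ this
  set θ : ℝ := Complex.arg ξ with hθdef
  have hexp : Complex.exp (θ * I) = ξ := by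
    have := Complex.norm_mul_exp_arg_mul_I ξ
    rwa [habs1, Complex.ofReal_one, one_mul] at this
  have hexpn : Complex.exp (((n*θ : ℝ) : ℂ) * I) = 1 := by
    have h1 : (((n*θ : ℝ)) : ℂ) * I = (n : ℂ) * ((θ:ℂ) * I) := by push_cast; ring
    rw [h1, Complex.exp_nat_mul, hexp, hξ]
  obtain ⟨k, hk⟩ := Complex.exp_eq_one_iff.mp hexpn
  have hk' : ((n*θ : ℝ) : ℂ) = (((k:ℝ) * (2*Real.pi) : ℝ) : ℂ) := by
    apply mul_right_cancel₀ Complex.I_ne_zero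
    rw [hk]; push_cast; ring
  have hkr : (n:ℝ)*θ = (k:ℝ) * (2*Real.pi) := by exact_mod_cast hk'
  have hθ0 : θ ≠ 0 := by
    intro h
    apply hξ1
    rw [← hexp, h]
    simp
  have hk0 : k ≠ 0 := by
    intro h
    rw [h] at hkr
    simp at hkr
    rcases hkr with h' | h'
    · linarith
    · exact hθ0 h'
  have hπ : 0 < Real.pi := Real.pi_pos
  have habsθ : |θ| ≤ Real.pi := Complex.abs_arg_le_pi ξ
  have hlow : 2*Real.pi/(n:ℝ) ≤ |θ| := by
    have h1 : (n:ℝ) * |θ| = |(k:ℝ)| * (2*Real.pi) := by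
      rw [← abs_of_pos hn0, ← abs_mul, hkr, abs_mul, abs_of_pos (by linarith : (0:ℝ) < 2*Real.pi)]
    have h2 : (1:ℝ) ≤ |(k:ℝ)| := by
      have := Int.one_le_abs hk0
      exact_mod_cast this
    rw [div_le_iff₀ hn0]
    nlinarith
  have hcos : Real.cos |θ| ≤ Real.cos (2*Real.pi/(n:ℝ)) :=
    Real.cos_le_cos_of_nonneg_of_le_pi (by positivity) habsθ hlow
  have hnormsq : ‖1 - ξ‖^2 = 2 - 2*Real.cos θ := by
    have e1 : ∀ w : ℂ, ‖w‖^2 = w.re^2 + w.im^2 := by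
      intro w
      rw [Complex.sq_norm, Complex.normSq_apply]; ring
    rw [← hexp, e1]
    simp only [Complex.sub_re, Complex.sub_im, Complex.one_re, Complex.one_im,
      Complex.exp_ofReal_mul_I_re, Complex.exp_ofReal_mul_I_im]
    nlinarith [Real.sin_sq_add_cos_sq θ]
  have hcosθ : Real.cos θ = Real.cos |θ| := (Real.cos_abs θ).symm
  have hsin : 0 ≤ Real.sin (Real.pi/(n:ℝ)) := by
    apply Real.sin_nonneg_of_nonneg_of_le_pi
    · positivity
    · rw [div_le_iff₀ hn0]; nlinarith [Real.pi_pos]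
  have hsq : (2*Real.sin (Real.pi/(n:ℝ)))^2 = 2 - 2*Real.cos (2*Real.pi/(n:ℝ)) := by
    have h2x : 2*Real.pi/(n:ℝ) = 2*(Real.pi/(n:ℝ)) := by ring
    rw [h2x, Real.cos_two_mul]
    nlinarith [Real.sin_sq_add_cos_sq (Real.pi/(n:ℝ))]
  have hkey : (2*Real.sin (Real.pi/(n:ℝ)))^2 ≤ ‖1-ξ‖^2 := by
    rw [hsq, hnormsq, hcosθ]
    linarith
  nlinarith [norm_nonneg (1-ξ), hsin]

noncomputable def qH (n : ℕ) : Polynomial ℂ :=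
  C ((n:ℂ)⁻¹) * (X^n - (X + C (-1))^n)

lemma qH_coeff (n : ℕ) (hn : 2 ≤ n) (j : ℕ) (hj : j < n) :
    (qH n).coeff j = -(n:ℂ)⁻¹ * (-1)^(n-j) * (n.choose j) := by
  unfold qH
  rw [coeff_C_mul, coeff_sub, coeff_X_pow, coeff_X_add_C_pow]
  rw [if_neg (by omega : ¬ j = n)]
  ring

lemma qH_coeff_top (n : ℕ) (hn : 2 ≤ n) : (qH n).coeff n = 0 := by
  unfold qH
  rw [coeff_C_mul, coeff_sub, coeff_X_pow, coeff_X_add_C_pow]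
  simp

lemma qH_coeff_m (n : ℕ) (hn : 2 ≤ n) : (qH n).coeff (n-1) = 1 := by
  rw [qH_coeff n hn (n-1) (by omega)]
  have h1 : n - (n-1) = 1 := by omega
  have h2 : n.choose (n-1) = n := by
    have h3 : n - 1 = n - 1 := rfl
    rw [show n.choose (n-1) = n.choose 1 from Nat.choose_symm (by omega : 1 ≤ n),
      Nat.choose_one_right]
  rw [h1, h2]
  have hn0 : (n:ℂ) ≠ 0 := Nat.cast_ne_zero.mpr (by omega)
  field_simp

lemma qH_ne_zero (n : ℕ) (hn : 2 ≤ n) : qH n ≠ 0 := by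
  intro h
  have := qH_coeff_m n hn
  rw [h, coeff_zero] at this
  exact absurd this.symm one_ne_zero

lemma qH_natDegree (n : ℕ) (hn : 2 ≤ n) : (qH n).natDegree = n - 1 := by
  have hup : (qH n).natDegree ≤ n := by
    unfold qH
    apply le_trans (natDegree_C_mul_le _ _)
    apply le_trans (natDegree_sub_le _ _)
    apply max_le
    · simp
    · apply le_trans (natDegree_pow_le)
      rw [natDegree_X_add_C]
      omega
  have hne : (qH n).natDegree ≠ n := by
    intro h
    apply leadingCoeff_ne_zero.mpr (qH_ne_zero n hn)
    rw [leadingCoeff, h, qH_coeff_top n hn]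
  have hlow : n - 1 ≤ (qH n).natDegree :=
    le_natDegree_of_ne_zero (by rw [qH_coeff_m n hn]; exact one_ne_zero)
  omega

lemma qH_roots (n : ℕ) (hn : 2 ≤ n) (z : ℂ) (hz : (qH n).eval z = 0) :
    ‖z‖ ≤ (2 * Real.sin (Real.pi / n))⁻¹ := by
  have hn0 : ((n:ℂ)) ≠ 0 := Nat.cast_ne_zero.mpr (by omega)
  have hzn : z^n = (z - 1)^n := by
    unfold qH at hz
    rw [eval_mul, eval_C, eval_sub, eval_pow, eval_pow, eval_add, eval_C, eval_X] at hz
    have h2 : z^n - (z + (-1))^n = 0 := by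
      rcases mul_eq_zero.mp hz with h | h
      · exact absurd h (inv_ne_zero hn0)
      · exact h
    have h3 : z + (-1) = z - 1 := by ring
    rw [h3] at h2
    linear_combination h2
  have hz0 : z ≠ 0 := by
    intro h
    rw [h] at hzn
    have : ((0:ℂ) - 1)^n = 0 := by rw [← hzn]; exact zero_pow (by omega)
    have h2 : ‖((0:ℂ) - 1)^n‖ = 0 := by rw [this]; simp
    rw [norm_pow] at h2
    simp at h2
  set ξ : ℂ := (z - 1) / z with hξdef
  have hξn : ξ^n = 1 := by
    rw [hξdef, div_pow, ← hzn, div_self (pow_ne_zero n hz0)]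
  have hξ1 : ξ ≠ 1 := by
    rw [hξdef]
    intro h
    rw [div_eq_one_iff_eq hz0] at h
    have : (1:ℂ) = 0 := by linear_combination -h
    exact one_ne_zero this
  have hdist := unity_dist n hn ξ hξn hξ1
  have hinv : 1 - ξ = 1/z := by
    rw [hξdef]
    field_simp
    ring
  rw [hinv] at hdist
  have hnorm : ‖(1:ℂ)/z‖ = 1/‖z‖ := by
    rw [norm_div, norm_one]
  rw [hnorm] at hdist
  have hsin : 0 < Real.sin (Real.pi / n) := by
    apply Real.sin_pos_of_pos_of_lt_pi
    · positivity
    · rw [div_lt_iff₀ (by positivity : (0:ℝ) < (n:ℝ))]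
      have hnr : (2:ℝ) ≤ (n:ℝ) := by exact_mod_cast hn
      nlinarith [Real.pi_pos]
  have hznorm : 0 < ‖z‖ := norm_pos_iff.mpr hz0
  rw [le_div_iff₀ hznorm] at hdist
  have h2s : 0 < 2 * Real.sin (Real.pi / n) := by linarith
  rw [inv_eq_one_div, le_div_iff₀ h2s]
  nlinarith [hdist]

lemma pair_qH (n : ℕ) (hn : 2 ≤ n) (h : Polynomial ℂ) :
    pairF (n-1) h (qH n) = ∑ k ∈ Finset.range n, h.coeff k / ((k:ℂ)+1) := by
  unfold pairF
  rw [show (n-1)+1 = n from by omega]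
  refine Finset.sum_congr rfl fun k hk => ?_
  rw [Finset.mem_range] at hk
  set m := n - 1 with hm
  have hkm : k ≤ m := by omega
  rw [qH_coeff n hn (m-k) (by omega)]
  rw [show n - (m-k) = k+1 from by omega]
  have hsymm : n.choose (m-k) = n.choose (k+1) := by
    rw [show m - k = n - (k+1) from by omega]
    exact Nat.choose_symm (by omega)
  rw [hsymm]
  have hpow : (-1:ℂ)^(k+1) = -(-1:ℂ)^k := by rw [pow_succ]; ring
  rw [hpow]
  have hpow2 : (-1:ℂ)^k * (-1:ℂ)^k = 1 := by
    rw [← pow_add, ← two_mul, pow_mul]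
    norm_num
  have hid : ((k:ℕ)+1) * (n.choose (k+1)) = n * (m.choose k) := by
    have h6 : m + 1 = n := by omega
    have h5 : n * m.choose k = n.choose (k+1) * (k+1) := by
      simpa [Nat.succ_eq_add_one, h6] using Nat.add_one_mul_choose_eq m k
    rw [mul_comm]
    exact h5.symm
  have hidC : ((k:ℂ)+1) * ((n.choose (k+1) : ℕ):ℂ) = (n:ℂ) * ((m.choose k : ℕ):ℂ) := by
    have : (((k+1) * (n.choose (k+1)) : ℕ):ℂ) = ((n * (m.choose k) : ℕ):ℂ) := by rw [hid]
    push_cast at this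
    linear_combination this
  have hn0 : (n:ℂ) ≠ 0 := Nat.cast_ne_zero.mpr (by omega)
  have hc0 : ((m.choose k : ℕ):ℂ) ≠ 0 := Nat.cast_ne_zero.mpr (Nat.choose_pos hkm).ne'
  have hk0 : ((k:ℂ)+1) ≠ 0 := by
    intro hz
    have : ((k:ℂ)+1) = (((k+1:ℕ)):ℂ) := by push_cast; ring
    rw [this] at hz
    exact (Nat.cast_ne_zero.mpr (by omega : k+1 ≠ 0)) hz
  field_simp
  have hch : n.choose (1+k) = n.choose (k+1) := by rw [Nat.add_comm]
  have hp : (-1:ℂ)^(k*2) = 1 := by rw [pow_mul, pow_two, hpow2]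
  ring_nf
  rw [hch, hp]
  linear_combination (h.coeff k) * hidC

theorem stmt_2 (n : ℕ) (hn : 2 ≤ n) (a : ℝ) (ha0 : 0 < a) (ha1 : a < 1)
    (z : ℕ → ℂ) (hz : ∀ k ∈ Finset.range (n - 1), ‖z k‖ ≤ 1)
    (p : Polynomial ℂ)
    (hp : p = (X - C (a : ℂ)) * ∏ k ∈ Finset.range (n - 1), (X - C (z k)))
    (ρ₁ : ℝ)
    (hρmin : ∀ ζ : ℂ, p.derivative.eval ζ = 0 → ρ₁ ≤ ‖(a : ℂ) - ζ‖)
    (hρmem : ∃ ζ : ℂ, p.derivative.eval ζ = 0 ∧ ‖(a : ℂ) - ζ‖ = ρ₁) :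
    ∀ k ∈ Finset.range (n - 1),
      2 * ρ₁ * Real.sin (Real.pi / n) ≤ ‖(a : ℂ) - z k‖ ∧
      ‖(a : ℂ) - z k‖ ≤ 1 + a := by
  intro k hk
  have hnr : (2:ℝ) ≤ (n:ℝ) := by exact_mod_cast hn
  have hsin : 0 < Real.sin (Real.pi / n) := by
    apply Real.sin_pos_of_pos_of_lt_pi
    · positivity
    · rw [div_lt_iff₀ (by positivity : (0:ℝ) < (n:ℝ))]
      nlinarith [Real.pi_pos]
  -- upper bound
  have hupper : ‖(a : ℂ) - z k‖ ≤ 1 + a := by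
    calc ‖(a : ℂ) - z k‖ ≤ ‖(a : ℂ)‖ + ‖z k‖ := norm_sub_le _ _
      _ ≤ a + 1 := by
          have h1 : ‖((a:ℝ) : ℂ)‖ = |a| := Complex.norm_real a
          rw [h1, abs_of_pos ha0]
          linarith [hz k hk]
      _ = 1 + a := by ring
  refine ⟨?_, hupper⟩
  -- lower bound
  rcases eq_or_ne (z k) ((a:ℝ) : ℂ) with heq | hne
  · -- degenerate case z k = a
    have hzer : ‖(a : ℂ) - z k‖ = 0 := by rw [heq]; simp
    have hpeval : p.derivative.eval ((a:ℝ):ℂ) = 0 := by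
      have hsplit : ∏ j ∈ Finset.range (n - 1), (X - C (z j))
          = (X - C (z k)) * ∏ j ∈ (Finset.range (n - 1)).erase k, (X - C (z j)) :=
        (Finset.mul_prod_erase _ _ hk).symm
      rw [hp, hsplit, heq]
      simp [derivative_mul]
    have h1 : ρ₁ ≤ 0 := by
      have := hρmin _ hpeval
      simpa using this
    rw [hzer]
    nlinarith
  · -- main case
    set m : ℕ := n - 1 with hm
    set r : ℂ := z k - ((a:ℝ):ℂ) with hrdef
    have hr : r ≠ 0 := sub_ne_zero.mpr hne
    have hncast0 : (n:ℂ) ≠ 0 := Nat.cast_ne_zero.mpr (by omega)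
    -- facts about p and p'
    have hprodmonic : (∏ j ∈ Finset.range (n-1), (X - C (z j))).Monic :=
      monic_prod_of_monic _ _ (fun i _ => monic_X_sub_C (z i))
    have hpmonic : p.Monic := by rw [hp]; exact (monic_X_sub_C _).mul hprodmonic
    have hpdeg : p.natDegree = n := by
      rw [hp, (monic_X_sub_C _).natDegree_mul hprodmonic, natDegree_X_sub_C,
        natDegree_prod_of_monic _ _ (fun i _ => monic_X_sub_C (z i))]
      simp only [natDegree_X_sub_C]
      rw [Finset.sum_const, Finset.card_range, smul_eq_mul, mul_one]
      omega
    have hpn : p.coeff n = 1 := by rw [← hpdeg]; exact hpmonic.coeff_natDegree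
    have hder_m : p.derivative.coeff m = (n:ℂ) := by
      rw [coeff_derivative, show m + 1 = n from by omega, hpn, one_mul]
      have hc : ((m + 1 : ℕ):ℂ) = ((n:ℕ):ℂ) := by rw [show m+1 = n from by omega]
      push_cast at hc
      linear_combination hc
    have hp'0 : p.derivative ≠ 0 := by
      intro h
      rw [h, coeff_zero] at hder_m
      exact hncast0 hder_m.symm
    have hp'deg : p.derivative.natDegree = m := by
      have hlow := le_natDegree_of_ne_zero (by rw [hder_m]; exact hncast0)
      have hup := natDegree_derivative_le p
      rw [hpdeg] at hup
      omega
    have hp'lc : p.derivative.leadingCoeff = (n:ℂ) := by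
      rw [leadingCoeff, hp'deg, hder_m]
    have hcard' : Multiset.card p.derivative.roots = m := by
      rw [Polynomial.splits_iff_card_roots.mp (IsAlgClosed.splits p.derivative),
        hp'deg]
    have hfact' : C ((n:ℂ)) * (p.derivative.roots.map fun u => X - C u).prod
        = p.derivative := by
      rw [← hp'lc]
      exact C_leadingCoeff_mul_prod_multiset_X_sub_C (by rw [hcard', hp'deg])
    -- the affine substitution
    set lin : Polynomial ℂ := C r * X + C ((a:ℝ):ℂ) with hlin
    have hlind : lin.derivative = C r := by
      rw [hlin]; simp [derivative_C_mul_X]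
    set P : Polynomial ℂ := p.comp lin with hP
    set h : Polynomial ℂ := p.derivative.comp lin with hh
    have hPd : P.derivative = C r * h := by
      rw [hP, derivative_comp, hlind, hh]
    -- key sum identity
    have hLsum : ∑ j ∈ Finset.range n, h.coeff j / ((j:ℂ)+1) = 0 := by
      have hlindeg : lin.natDegree ≤ 1 := by
        rw [hlin]
        apply le_trans (natDegree_add_le _ _)
        apply max_le
        · exact le_trans (natDegree_C_mul_le _ _) (le_of_eq natDegree_X)
        · simp
      have hPdeg : P.natDegree ≤ n := by
        rw [hP]
        calc (p.comp lin).natDegree ≤ p.natDegree * lin.natDegree := natDegree_comp_le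
          _ ≤ n * 1 := by rw [hpdeg]; exact Nat.mul_le_mul_left n hlindeg
          _ = n := by omega
      have hlineval1 : lin.eval 1 = z k := by
        rw [hlin]
        simp only [eval_add, eval_mul, eval_C, eval_X, mul_one, hrdef]
        ring
      have hlineval0 : lin.eval 0 = ((a:ℝ):ℂ) := by
        rw [hlin]; simp
      have hP1 : P.eval 1 = 0 := by
        rw [hP, eval_comp, hlineval1, hp]
        rw [eval_mul]
        have : (∏ j ∈ Finset.range (n-1), (X - C (z j))).eval (z k) = 0 := by
          rw [eval_prod]
          exact Finset.prod_eq_zero hk (by simp)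
        rw [this, mul_zero]
      have hP0 : P.eval 0 = 0 := by
        rw [hP, eval_comp, hlineval0, hp]
        simp
      have hsum0 : ∑ j ∈ Finset.range (n+1), P.coeff j = 0 := by
        have := eval_eq_sum_range' (show P.natDegree < n+1 by omega) (1:ℂ)
        simp only [one_pow, mul_one] at this
        rw [← this, hP1]
      have hcoe0 : P.coeff 0 = 0 := by
        rw [coeff_zero_eq_eval_zero, hP0]
      have hshift : ∑ j ∈ Finset.range n, P.coeff (j+1) = 0 := by
        have h' := Finset.sum_range_succ' (fun j => P.coeff j) n
        simp only [hsum0, hcoe0, add_zero] at h'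
        exact h'.symm
      have hterm : ∀ j, r * (h.coeff j / ((j:ℂ)+1)) = P.coeff (j+1) := by
        intro j
        have h1 : P.derivative.coeff j = P.coeff (j+1) * ((j:ℂ)+1) := by
          rw [coeff_derivative]
        have h2 : P.derivative.coeff j = r * h.coeff j := by
          rw [hPd, coeff_C_mul]
        have hj0 : ((j:ℂ)+1) ≠ 0 := by
          intro hz0
          have : ((j:ℂ)+1) = (((j+1:ℕ)):ℂ) := by push_cast; ring
          rw [this] at hz0
          exact (Nat.cast_ne_zero.mpr (by omega : j+1 ≠ 0)) hz0
        field_simp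
        rw [mul_comm ((j:ℂ)+1), ← h1, h2]
      have hrsum : r * ∑ j ∈ Finset.range n, h.coeff j / ((j:ℂ)+1) = 0 := by
        rw [Finset.mul_sum]
        rw [Finset.sum_congr rfl fun j _ => hterm j]
        exact hshift
      rcases mul_eq_zero.mp hrsum with h' | h'
      · exact absurd h' hr
      · exact h'
    -- factor h
    set w : Multiset ℂ := p.derivative.roots.map (fun u => (u - ((a:ℝ):ℂ))/r) with hw
    set l : List ℂ := w.toList with hl
    have hllen : l.length = m := by
      rw [hl, Multiset.length_toList, hw, Multiset.card_map, hcard']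
    have hlne : l ≠ [] := by
      intro hnil
      rw [hnil] at hllen
      simp at hllen
      omega
    have hcompfac : ∀ u : ℂ, (X - C u).comp lin = C r * (X - C ((u - ((a:ℝ):ℂ))/r)) := by
      intro u
      rw [sub_comp, X_comp, C_comp, hlin, mul_sub, ← C_mul,
        mul_div_cancel₀ _ hr]
      simp only [map_sub]
      ring
    have hhf : h = C ((n:ℂ) * r^m) * (l.map fun x => X - C x).prod := by
      rw [hh, ← hfact', mul_comp, C_comp, multiset_prod_comp, Multiset.map_map]
      have hmapeq : (p.derivative.roots.map fun u => ((X - C u).comp lin))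
          = p.derivative.roots.map fun u => C r * (X - C ((u - ((a:ℝ):ℂ))/r)) := by
        apply Multiset.map_congr rfl
        intro u _
        exact hcompfac u
      have hlprod : ((l.map fun x => X - C x).prod : Polynomial ℂ)
          = ((w.map fun x => X - C x).prod) := by
        conv_rhs => rw [← Multiset.coe_toList w]
        rw [Multiset.map_coe, Multiset.prod_coe]
      have hwmap : (w.map fun x => X - C x)
          = p.derivative.roots.map fun u => X - C ((u - ((a:ℝ):ℂ))/r) := by
        rw [hw, Multiset.map_map]
        rfl
      simp only [Function.comp_def]
      rw [hmapeq, Multiset.prod_map_mul, Multiset.map_const', Multiset.prod_replicate,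
        hcard', hlprod, hwmap, C_mul, ← C_pow]
      ring
    -- apply Grace
    set R : ℝ := (2 * Real.sin (Real.pi / n))⁻¹ with hRdef
    have hR0 : 0 ≤ R := le_of_lt (inv_pos.mpr (by linarith))
    have hpairh : pairF (n-1) h (qH n) = 0 := by
      rw [pair_qH n hn h]
      exact hLsum
    have hc0 : (n:ℂ) * r^m ≠ 0 := mul_ne_zero hncast0 (pow_ne_zero _ hr)
    have hpairf : pairF (n-1) ((l.map fun x => X - C x).prod) (qH n) = 0 := by
      have hcm := pair_C_mul (n-1) ((n:ℂ) * r^m) ((l.map fun x => X - C x).prod) (qH n)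
      rw [← hhf] at hcm
      rw [hpairh] at hcm
      rcases mul_eq_zero.mp hcm.symm with h' | h'
      · exact absurd h' hc0
      · exact h'
    obtain ⟨x, hxl, hxR⟩ := grace R hR0 l hlne (qH n) (qH_ne_zero n hn)
      (by rw [qH_natDegree n hn, hllen]) (fun y hy => qH_roots n hn y hy)
      (by rw [hllen]; exact hpairf)
    have hxw : x ∈ w := by
      rw [hl] at hxl
      exact Multiset.mem_toList.mp hxl
    obtain ⟨u, hu, hux⟩ := Multiset.mem_map.mp hxw
    have hueval : p.derivative.eval u = 0 := (Polynomial.mem_roots'.mp hu).2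
    have hρu := hρmin u hueval
    have hnorm : ‖((a:ℝ):ℂ) - u‖ = ‖r‖ * ‖x‖ := by
      have h1 : r * x = u - ((a:ℝ):ℂ) := by rw [← hux]; exact mul_div_cancel₀ _ hr
      rw [norm_sub_rev, ← h1, norm_mul]
    have hfin : ρ₁ ≤ ‖r‖ * R := by
      rw [hnorm] at hρu
      have := mul_le_mul_of_nonneg_left hxR (norm_nonneg r)
      linarith
    have hgoalnorm : ‖((a:ℝ):ℂ) - z k‖ = ‖r‖ := by
      rw [norm_sub_rev, hrdef]
    rw [hgoalnorm]
    calc 2 * ρ₁ * Real.sin (Real.pi / n)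
        ≤ 2 * (‖r‖ * R) * Real.sin (Real.pi / n) := by nlinarith [hsin]
      _ = ‖r‖ := by
          rw [hRdef]
          field_simp
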